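/- For θ ∈ (0, (1+√5)/2], the symmetric 2×2 matrix M_θ(σ_θ) with entries M₁₁ = σ_θ(1+θ) - 1, M₁₂ = M₂₁ = (σ_θ+θ-1)(1-θ), M₂₂ = σ_θ - (1-θ)² is positive semidefinite, where σ_θ = (3θ² - 7θ + 5 + √((3θ²-7θ+5)² - 4(2-θ)(3-θ)(θ-1)²)) / (2(3-θ)). -/

import Mathlib

lemma quad_form_nonneg_aux (a b c u v : ℝ) (ha : 0 ≤ a) (hc : 0 ≤ c)
    (h : a * c = b ^ 2) : 0 ≤ a * u^2 + 2 * b * u * v + c * v^2 := by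
  rcases eq_or_lt_of_le ha with hz | hp
  · have hb : b = 0 := by
      have : b ^ 2 = 0 := by rw [← h, ← hz]; ring
      exact pow_eq_zero_iff (by norm_num) |>.mp this
    rw [← hz, hb]
    nlinarith [sq_nonneg v]
  · nlinarith [sq_nonneg (a * u + b * v)]

/-- For `θ ∈ (0, (1+√5)/2]`, the symmetric 2×2 matrix `M_θ(σ_θ)` with entries
`M₁₁ = σ_θ(1+θ) - 1`, `M₁₂ = M₂₁ = (σ_θ+θ-1)(1-θ)`, `M₂₂ = σ_θ - (1-θ)²` is positive
semidefinite, where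
`σ_θ = (3θ² - 7θ + 5 + √((3θ²-7θ+5)² - 4(2-θ)(3-θ)(θ-1)²)) / (2(3-θ))`. -/
theorem matrix_theta_posSemidef (θ : ℝ) (hθ0 : 0 < θ)
    (hθ1 : θ ≤ (1 + Real.sqrt 5) / 2)
    (σθ : ℝ)
    (hσθ : σθ = (3 * θ^2 - 7 * θ + 5 +
      Real.sqrt ((3 * θ^2 - 7 * θ + 5)^2 - 4 * (2 - θ) * (3 - θ) * (θ - 1)^2)) /
        (2 * (3 - θ))) :
    Matrix.PosSemidef
      !![σθ * (1 + θ) - 1, (σθ + θ - 1) * (1 - θ);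
         (σθ + θ - 1) * (1 - θ), σθ - (1 - θ)^2] := by
  -- θ < 3
  have h5 : Real.sqrt 5 < 3 := by
    nlinarith [Real.sq_sqrt (show (0:ℝ) ≤ 5 by norm_num), Real.sqrt_nonneg 5]
  have hθ3 : θ < 3 := by linarith
  set D : ℝ := (3 * θ^2 - 7 * θ + 5)^2 - 4 * (2 - θ) * (3 - θ) * (θ - 1)^2 with hDdef
  have h4 : (0:ℝ) ≤ 4 * θ * ((1-θ)^2)^2 * (3-θ) :=
    mul_nonneg (mul_nonneg (by linarith) (sq_nonneg _)) (by linarith)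
  have h4' : (0:ℝ) ≤ 4 * θ^3 * (1-θ)^2 * (3-θ) :=
    mul_nonneg (mul_nonneg (by positivity) (sq_nonneg _)) (by linarith)
  have hDE : D = (1 - 7*θ + 7*θ^2 - 2*θ^3)^2 + 4 * θ * ((1-θ)^2)^2 * (3-θ) := by
    rw [hDdef]; ring
  have hD : 0 ≤ D := by rw [hDE]; positivity
  set s : ℝ := Real.sqrt D with hsdef
  have hs0 : 0 ≤ s := Real.sqrt_nonneg D
  have hs2 : s^2 = D := Real.sq_sqrt hD
  have hA : (0:ℝ) < 2 * (3 - θ) := by linarith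
  have hσ : σθ * (2 * (3 - θ)) = 3 * θ^2 - 7 * θ + 5 + s := by
    rw [hσθ, div_mul_cancel₀]
    exact ne_of_gt hA
  -- quadratic equation satisfied by σθ
  have hQ : (3-θ) * σθ^2 - (3*θ^2 - 7*θ + 5) * σθ + (2-θ)*(θ-1)^2 = 0 := by
    have h2 : (σθ * (2 * (3 - θ)) - (3*θ^2 - 7*θ + 5))^2 = D := by
      rw [show σθ * (2 * (3 - θ)) - (3*θ^2 - 7*θ + 5) = s from by linarith, hs2]
    have h3 : (4*(3-θ)) * ((3-θ) * σθ^2 - (3*θ^2 - 7*θ + 5) * σθ + (2-θ)*(θ-1)^2) = 0 := by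
      linear_combination h2 + hDdef
    rcases mul_eq_zero.mp h3 with h | h
    · nlinarith
    · exact h
  -- diagonal entries nonneg
  have h22 : 0 ≤ σθ - (1 - θ)^2 := by
    have hsq : (1 - 7*θ + 7*θ^2 - 2*θ^3)^2 ≤ s^2 := by rw [hs2, hDE]; linarith
    have hse : 1 - 7*θ + 7*θ^2 - 2*θ^3 ≤ s :=
      calc 1 - 7*θ + 7*θ^2 - 2*θ^3 ≤ |1 - 7*θ + 7*θ^2 - 2*θ^3| := le_abs_self _
        _ = Real.sqrt ((1 - 7*θ + 7*θ^2 - 2*θ^3)^2) := (Real.sqrt_sq_eq_abs _).symm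
        _ ≤ Real.sqrt (s^2) := Real.sqrt_le_sqrt hsq
        _ = s := Real.sqrt_sq hs0
    have hrep : σθ - (1 - θ)^2 = (s - (1 - 7*θ + 7*θ^2 - 2*θ^3)) / (2*(3-θ)) := by
      rw [eq_div_iff (ne_of_gt hA)]; linear_combination hσ
    rw [hrep]
    exact div_nonneg (by linarith) (le_of_lt hA)
  have h11 : 0 ≤ σθ * (1 + θ) - 1 := by
    have hsq : (1 + 4*θ^2 - 3*θ^3)^2 ≤ (s*(1+θ))^2 := by
      rw [mul_pow, hs2, hDE]; nlinarith [h4', h4]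
    have hs1 : 0 ≤ s * (1+θ) := mul_nonneg hs0 (by linarith)
    have hse : 1 + 4*θ^2 - 3*θ^3 ≤ s * (1+θ) :=
      calc 1 + 4*θ^2 - 3*θ^3 ≤ |1 + 4*θ^2 - 3*θ^3| := le_abs_self _
        _ = Real.sqrt ((1 + 4*θ^2 - 3*θ^3)^2) := (Real.sqrt_sq_eq_abs _).symm
        _ ≤ Real.sqrt ((s*(1+θ))^2) := Real.sqrt_le_sqrt hsq
        _ = s * (1+θ) := Real.sqrt_sq hs1
    have hrep : σθ * (1 + θ) - 1 = (s * (1+θ) - (1 + 4*θ^2 - 3*θ^3)) / (2*(3-θ)) := by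
      rw [eq_div_iff (ne_of_gt hA)]; linear_combination (1+θ) * hσ
    rw [hrep]
    exact div_nonneg (by linarith) (le_of_lt hA)
  -- determinant is zero
  have hdet : (σθ * (1 + θ) - 1) * (σθ - (1 - θ)^2) = ((σθ + θ - 1) * (1 - θ))^2 := by
    linear_combination θ * hQ
  rw [Matrix.posSemidef_iff_dotProduct_mulVec]
  constructor
  · show Matrix.conjTranspose _ = _
    ext i j
    fin_cases i <;> fin_cases j <;> rfl
  · intro x
    have hform : dotProduct (star x)
        (!![σθ * (1 + θ) - 1, (σθ + θ - 1) * (1 - θ);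
           (σθ + θ - 1) * (1 - θ), σθ - (1 - θ)^2].mulVec x)
        = (σθ * (1 + θ) - 1) * (x 0)^2 + 2 * ((σθ + θ - 1) * (1 - θ)) * (x 0) * (x 1)
          + (σθ - (1 - θ)^2) * (x 1)^2 := by
      simp [dotProduct, Matrix.mulVec, Fin.sum_univ_two]
      ring
    rw [hform]
    exact quad_form_nonneg_aux _ _ _ _ _ h11 h22 hdet
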